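/- For every integer n ≥ 2, the function r ↦ (∫₀^r sinh^{n−1} x dx)/sinh^{n−1}(r) is monotonically increasing on (0,∞). -/

import Mathlib

open Real intervalIntegral

private lemma F_hasDerivAt (k : ℕ) (r : ℝ) :
    HasDerivAt (fun r : ℝ => ∫ x in (0:ℝ)..r, Real.sinh x ^ (k + 1))
      (Real.sinh r ^ (k + 1)) r :=
  ((Real.continuous_sinh.pow (k + 1)).integral_hasStrictDerivAt 0 r).hasDerivAt

/-- `(k+1) * ∫₀^r sinh^{k+1} < sinh^{k+1} r` for `r > 0`. -/
private lemma key_lt (k : ℕ) {r : ℝ} (hr : 0 < r) :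
    ((k : ℝ) + 1) * (∫ x in (0:ℝ)..r, Real.sinh x ^ (k + 1)) < Real.sinh r ^ (k + 1) := by
  have h1 : (∫ x in (0:ℝ)..r, ((k : ℝ) + 1) * Real.sinh x ^ k * Real.cosh x)
      = Real.sinh r ^ (k + 1) - Real.sinh 0 ^ (k + 1) := by
    apply intervalIntegral.integral_eq_sub_of_hasDerivAt
    · intro x _
      have := (Real.hasDerivAt_sinh x).pow (k + 1)
      simpa [Pi.pow_def] using this
    · exact ((continuous_const.mul (Real.continuous_sinh.pow k)).mul
        Real.continuous_cosh).intervalIntegrable 0 r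
  have h2 : (∫ x in (0:ℝ)..r, ((k : ℝ) + 1) * Real.sinh x ^ (k + 1))
      < ∫ x in (0:ℝ)..r, ((k : ℝ) + 1) * Real.sinh x ^ k * Real.cosh x := by
    apply intervalIntegral.integral_lt_integral_of_continuousOn_of_le_of_exists_lt hr
    · exact (continuous_const.mul (Real.continuous_sinh.pow (k + 1))).continuousOn
    · exact ((continuous_const.mul (Real.continuous_sinh.pow k)).mul
        Real.continuous_cosh).continuousOn
    · intro x hx
      have hs : 0 ≤ Real.sinh x := Real.sinh_nonneg_iff.2 (le_of_lt hx.1)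
      have hsc : Real.sinh x ≤ Real.cosh x := (Real.sinh_lt_cosh x).le
      calc ((k : ℝ) + 1) * Real.sinh x ^ (k + 1)
          = ((k : ℝ) + 1) * Real.sinh x ^ k * Real.sinh x := by ring
        _ ≤ ((k : ℝ) + 1) * Real.sinh x ^ k * Real.cosh x := by
            apply mul_le_mul_of_nonneg_left hsc
            positivity
    · refine ⟨r, ⟨hr.le, le_rfl⟩, ?_⟩
      have hs : 0 < Real.sinh r := Real.sinh_pos_iff.2 hr
      have hsc : Real.sinh r < Real.cosh r := Real.sinh_lt_cosh r
      calc ((k : ℝ) + 1) * Real.sinh r ^ (k + 1)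
          = ((k : ℝ) + 1) * Real.sinh r ^ k * Real.sinh r := by ring
        _ < ((k : ℝ) + 1) * Real.sinh r ^ k * Real.cosh r := by
            apply mul_lt_mul_of_pos_left hsc
            positivity
  rw [intervalIntegral.integral_const_mul] at h2
  simpa [Real.sinh_zero, h1] using h2.trans_eq (by rw [h1]; simp)

/-- `H r = sinh^{k+2} r - (k+1) cosh r * F r > 0` for `r > 0`. -/
private lemma H_pos (k : ℕ) {r : ℝ} (hr : 0 < r) :
    0 < Real.sinh r ^ (k + 2)
      - ((k : ℝ) + 1) * Real.cosh r * (∫ x in (0:ℝ)..r, Real.sinh x ^ (k + 1)) := by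
  set F := fun r : ℝ => ∫ x in (0:ℝ)..r, Real.sinh x ^ (k + 1) with hF
  set H := fun r : ℝ => Real.sinh r ^ (k + 2) - ((k : ℝ) + 1) * Real.cosh r * F r with hH
  have hder : ∀ s : ℝ, HasDerivAt H
      (((k : ℝ) + 2) * Real.sinh s ^ (k + 1) * Real.cosh s
        - (((k : ℝ) + 1) * Real.sinh s * F s
            + ((k : ℝ) + 1) * Real.cosh s * Real.sinh s ^ (k + 1))) s := by
    intro s
    have h1 : HasDerivAt (fun r : ℝ => Real.sinh r ^ (k + 2))
        (((k : ℝ) + 2) * Real.sinh s ^ (k + 1) * Real.cosh s) s := by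
      have := (Real.hasDerivAt_sinh s).pow (k + 2)
      simpa [Pi.pow_def] using this
    have h2 : HasDerivAt (fun r : ℝ => ((k : ℝ) + 1) * Real.cosh r * F r)
        (((k : ℝ) + 1) * Real.sinh s * F s
          + ((k : ℝ) + 1) * Real.cosh s * Real.sinh s ^ (k + 1)) s := by
      exact ((Real.hasDerivAt_cosh s).const_mul ((k : ℝ) + 1)).mul (F_hasDerivAt k s)
    exact h1.sub h2
  have hmono : StrictMonoOn H (Set.Ici 0) := by
    apply strictMonoOn_of_deriv_pos (convex_Ici 0)
    · exact fun s _ => (hder s).continuousAt.continuousWithinAt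
    · intro s hs
      rw [interior_Ici] at hs
      rw [(hder s).deriv]
      have hs0 : (0:ℝ) < s := hs
      have hsp : 0 < Real.sinh s := Real.sinh_pos_iff.2 hs0
      have hkey := key_lt k hs0
      have : ((k : ℝ) + 2) * Real.sinh s ^ (k + 1) * Real.cosh s
          - (((k : ℝ) + 1) * Real.sinh s * F s
            + ((k : ℝ) + 1) * Real.cosh s * Real.sinh s ^ (k + 1))
          = Real.sinh s * (Real.sinh s ^ k * Real.cosh s - ((k : ℝ) + 1) * F s) := by
        ring
      rw [this]
      apply mul_pos hsp
      have h3 : Real.sinh s ^ (k + 1) ≤ Real.sinh s ^ k * Real.cosh s := by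
        rw [pow_succ]
        exact mul_le_mul_of_nonneg_left (Real.sinh_lt_cosh s).le (by positivity)
      linarith
  have h0 : H 0 = 0 := by simp [hH, hF]
  have := hmono (Set.self_mem_Ici) (Set.mem_Ici.2 hr.le) hr
  rw [h0] at this
  exact this

theorem sinh_integral_div_sinh_pow_pred_strictMono
    (n : ℕ) (hn : 2 ≤ n) :
    StrictMonoOn
      (fun r : ℝ => (∫ x in (0 : ℝ)..r, Real.sinh x ^ (n - 1)) / Real.sinh r ^ (n - 1))
      (Set.Ioi 0) := by
  obtain ⟨k, rfl⟩ : ∃ k, n = k + 2 := ⟨n - 2, by omega⟩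
  have hn1 : k + 2 - 1 = k + 1 := by omega
  rw [hn1]
  set F := fun r : ℝ => ∫ x in (0:ℝ)..r, Real.sinh x ^ (k + 1) with hF
  have hder : ∀ r : ℝ, 0 < r → HasDerivAt
      (fun r : ℝ => F r / Real.sinh r ^ (k + 1))
      ((Real.sinh r ^ (k + 1) * Real.sinh r ^ (k + 1)
        - F r * (((k : ℝ) + 1) * Real.sinh r ^ k * Real.cosh r))
        / (Real.sinh r ^ (k + 1)) ^ 2) r := by
    intro r hr
    have hsp : 0 < Real.sinh r := Real.sinh_pos_iff.2 hr
    have hpow : HasDerivAt (fun r : ℝ => Real.sinh r ^ (k + 1))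
        (((k : ℝ) + 1) * Real.sinh r ^ k * Real.cosh r) r := by
      have := (Real.hasDerivAt_sinh r).pow (k + 1)
      simpa [Pi.pow_def] using this
    exact (F_hasDerivAt k r).div hpow (by positivity)
  apply strictMonoOn_of_deriv_pos (convex_Ioi 0)
  · intro r hr
    exact (hder r hr).continuousAt.continuousWithinAt
  · intro r hr
    rw [interior_Ioi] at hr
    have hr0 : (0:ℝ) < r := hr
    have hsp : 0 < Real.sinh r := Real.sinh_pos_iff.2 hr0
    rw [(hder r hr0).deriv]
    apply div_pos
    · have hH := H_pos k hr0
      have : Real.sinh r ^ (k + 1) * Real.sinh r ^ (k + 1)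
          - F r * (((k : ℝ) + 1) * Real.sinh r ^ k * Real.cosh r)
          = Real.sinh r ^ k * (Real.sinh r ^ (k + 2)
              - ((k : ℝ) + 1) * Real.cosh r * F r) := by
        ring
      rw [this]
      exact mul_pos (by positivity) hH
    · positivity
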